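/- Let Ω ⊆ ℝ^N be a nonempty open set of finite Lebesgue measure, let 1 ≤ p < ∞, and let f : Ω → ℝ^m be measurable. Then f ∈ L^p(Ω; ℝ^m) if and only if the function f̃(x,y) := f(y) − f(x) belongs to L^p(Ω × Ω; ℝ^m). -/

import Mathlib

open MeasureTheory Set
open scoped ENNReal NNReal

/-- For a nonempty open set `Ω ⊆ ℝ^N` of finite measure, `1 ≤ p < ∞`, and a
measurable `f : Ω → ℝ^m`, `f ∈ L^p(Ω)` iff `(x,y) ↦ f y - f x` belongs to `L^p(Ω × Ω)`. -/
theorem statement0 (N m : ℕ) (Ω : Set (EuclideanSpace ℝ (Fin N)))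
    (hΩ_open : IsOpen Ω) (hΩ_ne : Ω.Nonempty) (hΩ_fin : volume Ω < ⊤)
    (p : ℝ≥0∞) (hp1 : 1 ≤ p) (hp_top : p ≠ ⊤)
    (f : EuclideanSpace ℝ (Fin N) → EuclideanSpace ℝ (Fin m)) (hf : Measurable f) :
    MemLp f p (volume.restrict Ω) ↔
      MemLp (fun z : EuclideanSpace ℝ (Fin N) × EuclideanSpace ℝ (Fin N) => f z.2 - f z.1) p
        ((volume.restrict Ω).prod (volume.restrict Ω)) := by
  set μ := volume.restrict Ω with hμ
  have hμuniv : μ univ = volume Ω := by simp [hμ]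
  haveI : IsFiniteMeasure μ := ⟨by simpa [hμuniv] using hΩ_fin⟩
  have hp0 : p ≠ 0 := (lt_of_lt_of_le one_pos hp1).ne'
  constructor
  · intro h
    have hsmul : MemLp f p (μ univ • μ) := h.smul_measure (by simp [hμuniv, hΩ_fin.ne])
    have h2 : MemLp (fun z : EuclideanSpace ℝ (Fin N) × EuclideanSpace ℝ (Fin N) => f z.2) p
        (μ.prod μ) := by
      have := ((Measure.map_snd_prod (μ := μ) (ν := μ)) ▸ hsmul).comp_of_map
        measurable_snd.aemeasurable
      exact this
    have h1 : MemLp (fun z : EuclideanSpace ℝ (Fin N) × EuclideanSpace ℝ (Fin N) => f z.1) p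
        (μ.prod μ) := by
      have := ((Measure.map_fst_prod (μ := μ) (ν := μ)) ▸ hsmul).comp_of_map
        measurable_fst.aemeasurable
      exact this
    exact h2.sub h1
  · intro h
    -- Fubini: for a.e. x, y ↦ f y - f x is in ℒp
    have hfin : ∫⁻ x, ∫⁻ y, (‖f y - f x‖₊ : ℝ≥0∞) ^ p.toReal ∂μ ∂μ < ⊤ := by
      have hsn := h.2
      rw [eLpNorm_eq_lintegral_rpow_enorm_toReal hp0 hp_top] at hsn
      have hptr : 0 < p.toReal := ENNReal.toReal_pos hp0 hp_top
      have hlint : ∫⁻ z, (‖f z.2 - f z.1‖₊ : ℝ≥0∞) ^ p.toReal ∂(μ.prod μ) < ⊤ := by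
        by_contra hcon
        push_neg at hcon
        simp only [← enorm_eq_nnnorm] at hcon
        rw [top_le_iff.mp hcon] at hsn
        rw [one_div, ENNReal.top_rpow_of_pos (by positivity)] at hsn
        exact lt_irrefl _ hsn
      rwa [MeasureTheory.lintegral_prod _ ?_] at hlint
      exact ((hf.comp measurable_snd).sub (hf.comp measurable_fst)).enorm.pow_const _
        |>.aemeasurable
    have hae : ∀ᵐ x ∂μ, ∫⁻ y, (‖f y - f x‖₊ : ℝ≥0∞) ^ p.toReal ∂μ < ⊤ :=
      ae_lt_top (by
        exact (Measurable.lintegral_prod_right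
          (((hf.comp measurable_snd).sub (hf.comp measurable_fst)).enorm.pow_const _))) hfin.ne
    have hμne : μ ≠ 0 := by
      intro h0
      have := hΩ_open.measure_pos volume hΩ_ne
      rw [← hμuniv, h0] at this
      simp at this
    haveI : (ae μ).NeBot := ae_neBot.mpr hμne
    obtain ⟨x₀, hx₀⟩ := hae.exists
    have hg : MemLp (fun y => f y - f x₀) p μ := by
      refine ⟨(hf.sub measurable_const).aestronglyMeasurable, ?_⟩
      rw [eLpNorm_eq_lintegral_rpow_enorm_toReal hp0 hp_top]
      exact ENNReal.rpow_lt_top_of_nonneg (by positivity) hx₀.ne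
    have hconst : MemLp (fun _ : EuclideanSpace ℝ (Fin N) => f x₀) p μ := memLp_const _
    have : MemLp (fun y => (f y - f x₀) + f x₀) p μ := hg.add hconst
    simpa using this
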